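/- (Uhlmann, majorization direction) Let Γ, Γ' be density operators on a D-dimensional Hilbert space. If Γ' = Σ_i p_i U_i Γ U_i† for some unitaries U_i and weights p_i ≥ 0 with Σ_i p_i = 1, then the spectrum of Γ' is majorized by the spectrum of Γ. -/

import Mathlib

open scoped ComplexOrder

/-- The vector `v` with entries sorted in decreasing order. -/
noncomputable def sortDesc {d : ℕ} (v : Fin d → ℝ) : Fin d → ℝ :=
  fun i => v (Tuple.sort (fun j => -v j) i)

/-- Sum of the `k` largest entries of `v`. -/
noncomputable def psum {d : ℕ} (v : Fin d → ℝ) (k : ℕ) : ℝ :=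
  ∑ i ∈ Finset.univ.filter (fun i : Fin d => (i : ℕ) < k), sortDesc v i

/-- `v ≺ w` : `v` is majorized by `w`. -/
def Majorizes {d : ℕ} (v w : Fin d → ℝ) : Prop :=
  (∀ k : ℕ, k ≤ d → psum v k ≤ psum w k) ∧ ∑ i, v i = ∑ i, w i

lemma sortDesc_antitone {d : ℕ} (v : Fin d → ℝ) : Antitone (sortDesc v) := by
  intro i j hij
  have h := Tuple.monotone_sort (fun j => -v j) hij
  simpa [sortDesc, neg_le_neg_iff] using h

lemma card_filter_lt {d k : ℕ} (hk : k ≤ d) :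
    (Finset.univ.filter (fun i : Fin d => (i : ℕ) < k)).card = k := by
  rw [Finset.card_filter]
  rw [Fin.sum_univ_eq_sum_range (fun i => if i < k then 1 else 0) d]
  rw [← Finset.card_filter]
  have : (Finset.range d).filter (fun i => i < k) = Finset.range k := by
    ext i; simp; omega
  rw [this, Finset.card_range]

/-- Key rearrangement bound: if `0 ≤ c i ≤ 1` and `∑ c = k`, then for antitone `μ`,
`∑ c i * μ i` is at most the sum of the first `k` values of `μ`. -/
lemma sum_mul_le_sum_first {d : ℕ} (μ : Fin d → ℝ) (hμ : Antitone μ) (c : Fin d → ℝ)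
    (hc0 : ∀ i, 0 ≤ c i) (hc1 : ∀ i, c i ≤ 1) (k : ℕ) (hk : k ≤ d)
    (hcs : ∑ i, c i = k) :
    ∑ i, c i * μ i ≤ ∑ i : Fin d, (if (i : ℕ) < k then μ i else 0) := by
  set χ : Fin d → ℝ := fun i => if (i : ℕ) < k then 1 else 0 with hχdef
  have hχsum : ∑ i, χ i = k := by
    rw [hχdef]
    simp only [Finset.sum_boole]
    rw [card_filter_lt hk]
  have hχμ : ∀ i, χ i * μ i = if (i : ℕ) < k then μ i else 0 := by
    intro i; by_cases h : (i : ℕ) < k <;> simp [hχdef, h]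
  rcases Nat.eq_zero_or_pos k with rfl | hkpos
  · have hall : ∀ i ∈ Finset.univ, c i = 0 := by
      rw [← Finset.sum_eq_zero_iff_of_nonneg (fun i _ => hc0 i)]
      simpa using hcs
    have : ∑ i, c i * μ i = 0 := Finset.sum_eq_zero (fun i hi => by rw [hall i hi, zero_mul])
    simp [this]
  · set τ : ℝ := μ ⟨k - 1, by omega⟩ with hτ
    have key : ∀ i : Fin d, (c i - χ i) * (μ i - τ) ≤ 0 := by
      intro i
      by_cases h : (i : ℕ) < k
      · apply mul_nonpos_of_nonpos_of_nonneg
        · simp [hχdef, h]; linarith [hc1 i]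
        · have : τ ≤ μ i := hμ (by simp [Fin.le_def]; omega)
          linarith
      · apply mul_nonpos_of_nonneg_of_nonpos
        · simp [hχdef, h]; exact hc0 i
        · have : μ i ≤ τ := hμ (by simp [Fin.le_def]; omega)
          linarith
    have h1 : ∑ i, (c i - χ i) * (μ i - τ) ≤ 0 :=
      Finset.sum_nonpos (fun i _ => key i)
    have h2 : ∑ i, (c i - χ i) * (μ i - τ)
        = ∑ i, c i * μ i - ∑ i, χ i * μ i - τ * (∑ i, c i) + τ * (∑ i, χ i) := by
      rw [Finset.mul_sum, Finset.mul_sum, ← Finset.sum_sub_distrib, ← Finset.sum_sub_distrib,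
        ← Finset.sum_add_distrib]
      exact Finset.sum_congr rfl (fun i _ => by ring)
    rw [h2, hcs, hχsum] at h1
    have h3 : ∑ i, χ i * μ i = ∑ i : Fin d, (if (i : ℕ) < k then μ i else 0) :=
      Finset.sum_congr rfl (fun i _ => hχμ i)
    linarith

/-- Doubly stochastic mixing implies majorization. -/
lemma majorizes_of_doublyStochastic {d : ℕ} (B : Fin d → Fin d → ℝ) (v w : Fin d → ℝ)
    (hB0 : ∀ j t, 0 ≤ B j t) (hrow : ∀ j, ∑ t, B j t = 1) (hcol : ∀ t, ∑ j, B j t = 1)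
    (hvw : ∀ j, v j = ∑ t, B j t * w t) : Majorizes v w := by
  constructor
  · intro k hk
    set σ := Tuple.sort (fun j => -v j) with hσ
    set F := Finset.univ.filter (fun i : Fin d => (i : ℕ) < k) with hF
    set c : Fin d → ℝ := fun t => ∑ i ∈ F, B (σ i) t with hc
    have hpsum : psum v k = ∑ t, c t * w t := by
      rw [psum]
      calc ∑ i ∈ F, sortDesc v i = ∑ i ∈ F, ∑ t, B (σ i) t * w t :=
            Finset.sum_congr rfl (fun i _ => by rw [sortDesc, ← hσ, hvw])
        _ = ∑ t, ∑ i ∈ F, B (σ i) t * w t := Finset.sum_comm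
        _ = ∑ t, c t * w t := by
            refine Finset.sum_congr rfl (fun t _ => ?_)
            rw [hc, Finset.sum_mul]
    set π := Tuple.sort (fun j => -w j) with hπ
    have hre : ∑ t, c t * w t = ∑ t, c (π t) * sortDesc w t := by
      rw [← Equiv.sum_comp π (fun t => c t * w t)]
      rfl
    have hc0 : ∀ t, 0 ≤ c (π t) := fun t => Finset.sum_nonneg (fun i _ => hB0 _ _)
    have hc1 : ∀ t, c (π t) ≤ 1 := by
      intro t
      have h1 : c (π t) ≤ ∑ i : Fin d, B (σ i) (π t) :=
        Finset.sum_le_sum_of_subset_of_nonneg (Finset.subset_univ F)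
          (fun i _ _ => hB0 _ _)
      have h2 : ∑ i : Fin d, B (σ i) (π t) = ∑ j, B j (π t) :=
        Equiv.sum_comp σ (fun j => B j (π t))
      rw [h2, hcol] at h1
      exact h1
    have hcs : ∑ t, c (π t) = k := by
      rw [Equiv.sum_comp π c, hc]
      calc ∑ t, ∑ i ∈ F, B (σ i) t = ∑ i ∈ F, ∑ t, B (σ i) t := Finset.sum_comm
        _ = ∑ i ∈ F, 1 := Finset.sum_congr rfl (fun i _ => hrow _)
        _ = (k : ℝ) := by rw [Finset.sum_const, hF, card_filter_lt hk]; simp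
    have hfin := sum_mul_le_sum_first (sortDesc w) (sortDesc_antitone w)
      (fun t => c (π t)) hc0 hc1 k hk hcs
    rw [hpsum, hre]
    rw [psum, Finset.sum_filter]
    exact hfin
  · calc ∑ j, v j = ∑ j, ∑ t, B j t * w t := Finset.sum_congr rfl (fun j _ => hvw j)
      _ = ∑ t, ∑ j, B j t * w t := Finset.sum_comm
      _ = ∑ t, w t := by
          refine Finset.sum_congr rfl (fun t _ => ?_)
          rw [← Finset.sum_mul, hcol, one_mul]

lemma unitary_row_sum {d : ℕ} {M : Matrix (Fin d) (Fin d) ℂ}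
    (hM : M ∈ Matrix.unitaryGroup (Fin d) ℂ) (j : Fin d) :
    ∑ t, Complex.normSq (M j t) = 1 := by
  have h := Matrix.mem_unitaryGroup_iff.mp hM
  have h2 := congrFun (congrFun h j) j
  rw [Matrix.mul_apply] at h2
  simp only [Matrix.one_apply_eq] at h2
  have h3 : ∑ t, ((Complex.normSq (M j t) : ℂ)) = 1 := by
    rw [← h2]
    refine Finset.sum_congr rfl (fun t _ => ?_)
    rw [Matrix.star_apply, ← Complex.mul_conj]
    rfl
  have h4 : ((∑ t, Complex.normSq (M j t) : ℝ) : ℂ) = ((1 : ℝ) : ℂ) := by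
    push_cast
    simpa using h3
  exact_mod_cast h4

lemma unitary_col_sum {d : ℕ} {M : Matrix (Fin d) (Fin d) ℂ}
    (hM : M ∈ Matrix.unitaryGroup (Fin d) ℂ) (t : Fin d) :
    ∑ j, Complex.normSq (M j t) = 1 := by
  have h := Matrix.mem_unitaryGroup_iff'.mp hM
  have h2 := congrFun (congrFun h t) t
  rw [Matrix.mul_apply] at h2
  simp only [Matrix.one_apply_eq] at h2
  have h3 : ∑ j, ((Complex.normSq (M j t) : ℂ)) = 1 := by
    rw [← h2]
    refine Finset.sum_congr rfl (fun j _ => ?_)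
    rw [Matrix.star_apply, Complex.normSq_eq_conj_mul_self]
    rfl
  have h4 : ((∑ j, Complex.normSq (M j t) : ℝ) : ℂ) = ((1 : ℝ) : ℂ) := by
    push_cast
    simpa using h3
  exact_mod_cast h4

set_option maxHeartbeats 1000000 in
/-- Uhlmann's theorem (majorization direction): if `Γ' = ∑ i, p i • U i Γ (U i)†`
with `U i` unitary and `p` a probability vector, then `spec(Γ') ≺ spec(Γ)`. -/
theorem uhlmann_majorization {D n : ℕ}
    (Γ Γ' : Matrix (Fin D) (Fin D) ℂ)
    (hΓ : Γ.PosSemidef) (hΓtr : Γ.trace = 1)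
    (hΓ' : Γ'.PosSemidef) (hΓ'tr : Γ'.trace = 1)
    (U : Fin n → Matrix (Fin D) (Fin D) ℂ)
    (hU : ∀ i, U i ∈ Matrix.unitaryGroup (Fin D) ℂ)
    (p : Fin n → ℝ) (hp : ∀ i, 0 ≤ p i) (hpsum : ∑ i, p i = 1)
    (hmix : Γ' = ∑ i, (p i : ℂ) • (U i * Γ * (U i).conjTranspose)) :
    Majorizes hΓ'.1.eigenvalues hΓ.1.eigenvalues := by
  set V : Matrix (Fin D) (Fin D) ℂ := (hΓ.1.eigenvectorUnitary : Matrix (Fin D) (Fin D) ℂ) with hV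
  set W : Matrix (Fin D) (Fin D) ℂ := (hΓ'.1.eigenvectorUnitary : Matrix (Fin D) (Fin D) ℂ) with hW
  set M : Fin n → Matrix (Fin D) (Fin D) ℂ := fun i => star W * U i * V with hM
  have hMu : ∀ i, M i ∈ Matrix.unitaryGroup (Fin D) ℂ := by
    intro i
    exact mul_mem (mul_mem (Unitary.star_mem hΓ'.1.eigenvectorUnitary.2) (hU i))
      hΓ.1.eigenvectorUnitary.2
  set lam := hΓ.1.eigenvalues with hlam
  set lam' := hΓ'.1.eigenvalues with hlam'
  have hdiag : Matrix.diagonal (RCLike.ofReal ∘ lam')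
      = ∑ i, (p i : ℂ) • (M i * Matrix.diagonal (RCLike.ofReal ∘ lam) * star (M i)) := by
    calc Matrix.diagonal (RCLike.ofReal ∘ lam')
        = star W * Γ' * W := by
          rw [← hΓ'.1.conjStarAlgAut_star_eigenvectorUnitary, Unitary.conjStarAlgAut_star_apply]
      _ = star W * (∑ i, (p i : ℂ) • (U i * Γ * (U i).conjTranspose)) * W := by rw [← hmix]
      _ = ∑ i, (p i : ℂ) • (star W * (U i * Γ * (U i).conjTranspose) * W) := by
          rw [Finset.mul_sum, Finset.sum_mul]
          exact Finset.sum_congr rfl (fun i _ => by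
            rw [Matrix.mul_smul, Matrix.smul_mul])
      _ = ∑ i, (p i : ℂ) • (M i * Matrix.diagonal (RCLike.ofReal ∘ lam) * star (M i)) := by
          refine Finset.sum_congr rfl (fun i _ => ?_)
          congr 1
          conv_lhs => rw [hΓ.1.spectral_theorem]
          rw [hM]
          simp only [Unitary.conjStarAlgAut_apply, ← Matrix.star_eq_conjTranspose, star_mul, star_star, Matrix.mul_assoc, hV, hlam]
  set B : Fin D → Fin D → ℝ := fun j t => ∑ i, p i * Complex.normSq (M i j t) with hB
  have hvw : ∀ j, lam' j = ∑ t, B j t * lam t := by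
    intro j
    have hj := congrFun (congrFun hdiag j) j
    rw [Matrix.sum_apply] at hj
    simp only [Matrix.diagonal_apply_eq, Function.comp_apply, Matrix.smul_apply, smul_eq_mul,
      Matrix.mul_apply, Matrix.diagonal_apply, mul_ite, mul_zero, ite_mul, zero_mul,
      Finset.sum_ite_eq', Finset.mem_univ, if_true, Matrix.star_apply] at hj
    have hterm : ∀ (i : Fin n) (t : Fin D), M i j t * RCLike.ofReal (lam t) * star (M i j t)
        = ((Complex.normSq (M i j t) : ℝ) : ℂ) * ((lam t : ℝ) : ℂ) := by
      intro i t
      rw [show (RCLike.ofReal (lam t) : ℂ) = ((lam t : ℝ) : ℂ) from rfl,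
        show star (M i j t) = (starRingEnd ℂ) (M i j t) from rfl, ← Complex.mul_conj]
      ring
    have h5 : ((lam' j : ℝ) : ℂ)
        = ∑ t, ∑ i, ((p i : ℝ) : ℂ) * (((Complex.normSq (M i j t) : ℝ) : ℂ) * ((lam t : ℝ) : ℂ)) := by
      rw [show ((lam' j : ℝ) : ℂ) = RCLike.ofReal (lam' j) from rfl, hj]
      rw [← Finset.sum_comm]
      refine Finset.sum_congr rfl fun i _ => ?_
      rw [Finset.mul_sum]
      refine Finset.sum_congr rfl fun t _ => ?_
      rw [hterm i t]
    have h6 : ((∑ t, B j t * lam t : ℝ) : ℂ)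
        = ∑ t, ∑ i, ((p i : ℝ) : ℂ) * (((Complex.normSq (M i j t) : ℝ) : ℂ) * ((lam t : ℝ) : ℂ)) := by
      simp only [hB]
      push_cast
      refine Finset.sum_congr rfl fun t _ => ?_
      rw [Finset.sum_mul]
      exact Finset.sum_congr rfl fun i _ => by ring
    have h7 : ((lam' j : ℝ) : ℂ) = ((∑ t, B j t * lam t : ℝ) : ℂ) := h5.trans h6.symm
    exact_mod_cast h7
  have hB0 : ∀ j t, 0 ≤ B j t := fun j t =>
    Finset.sum_nonneg (fun i _ => mul_nonneg (hp i) (Complex.normSq_nonneg _))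
  have hrow : ∀ j, ∑ t, B j t = 1 := by
    intro j
    rw [hB]
    calc ∑ t, ∑ i, p i * Complex.normSq (M i j t)
        = ∑ i, ∑ t, p i * Complex.normSq (M i j t) := Finset.sum_comm
      _ = ∑ i, p i * ∑ t, Complex.normSq (M i j t) := by
          exact Finset.sum_congr rfl (fun i _ => (Finset.mul_sum _ _ _).symm)
      _ = ∑ i, p i := by
          exact Finset.sum_congr rfl (fun i _ => by rw [unitary_row_sum (hMu i), mul_one])
      _ = 1 := hpsum
  have hcol : ∀ t, ∑ j, B j t = 1 := by
    intro t
    rw [hB]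
    calc ∑ j, ∑ i, p i * Complex.normSq (M i j t)
        = ∑ i, ∑ j, p i * Complex.normSq (M i j t) := Finset.sum_comm
      _ = ∑ i, p i * ∑ j, Complex.normSq (M i j t) := by
          exact Finset.sum_congr rfl (fun i _ => (Finset.mul_sum _ _ _).symm)
      _ = ∑ i, p i := by
          exact Finset.sum_congr rfl (fun i _ => by rw [unitary_col_sum (hMu i), mul_one])
      _ = 1 := hpsum
  exact majorizes_of_doublyStochastic B lam' lam hB0 hrow hcol hvw
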